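/- Let c ≥ 1 be an integer and let q : {0,1}^n → ℝ satisfy q̂(s) = 0 for every s with |s| > c. Let β ≥ 0 and let δ_j, δ_j' ∈ [0,1] satisfy |δ_j − δ_j'| ≤ β for all 1 ≤ j ≤ n. Then ||T^1_{δ_1} ∘ ⋯ ∘ T^n_{δ_n} q − T^1_{δ_1'} ∘ ⋯ ∘ T^n_{δ_n'} q||_1 ≤ c β · 2^n · (Σ_{s: |s| ≤ c} q̂(s)²)^{1/2}. -/

import Mathlib

/-- Dot product of two bit strings, `s·x = Σ_j s_j x_j`. -/
def dot {n : ℕ} (s x : Fin n → Bool) : ℕ :=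
  (Finset.univ.filter fun j => s j && x j).card

/-- Hamming weight `|s| = Σ_j s_j`. -/
def wt {n : ℕ} (s : Fin n → Bool) : ℕ :=
  (Finset.univ.filter fun j => s j).card

/-- Fourier coefficient `f̂(s) = 2^{-n} Σ_x f(x) (-1)^{s·x}`. -/
noncomputable def fhat {n : ℕ} (f : (Fin n → Bool) → ℝ) (s : Fin n → Bool) : ℝ :=
  (1 / 2 ^ n) * ∑ x, f x * (-1 : ℝ) ^ dot s x

/-- The single-qubit noise operator `T^j_δ`:
`(T^j_δ f)(x) = (1 - δ/2) f(x) + (δ/2) f(x ⊕ e_j)`. -/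
noncomputable def noiseT {n : ℕ} (j : Fin n) (δ : ℝ) (f : (Fin n → Bool) → ℝ) :
    (Fin n → Bool) → ℝ :=
  fun x => (1 - δ / 2) * f x + (δ / 2) * f (Function.update x j (!x j))

/-- The composed noise operator `T^1_{δ_1} ∘ ⋯ ∘ T^n_{δ_n}`. -/
noncomputable def noiseComp {n : ℕ} (δ : Fin n → ℝ) (f : (Fin n → Bool) → ℝ) :
    (Fin n → Bool) → ℝ :=
  (List.finRange n).foldr (fun j g => noiseT j (δ j) g) f

/-- The `l1` norm `‖f‖₁ = Σ_x |f(x)|`. -/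
noncomputable def l1 {n : ℕ} (f : (Fin n → Bool) → ℝ) : ℝ :=
  ∑ x, |f x|

open Finset

lemma chi_eq {n : ℕ} (s x : Fin n → Bool) :
    ((-1 : ℝ) ^ dot s x) = ∏ j, (if s j && x j then (-1:ℝ) else 1) := by
  rw [Finset.prod_ite, Finset.prod_const, Finset.prod_const, one_pow, mul_one, dot]

lemma flip_invol {n : ℕ} (j : Fin n) :
    Function.Involutive (fun x : Fin n → Bool => Function.update x j (!x j)) := by
  intro x
  simp [Function.update_idem]

lemma chi_flip {n : ℕ} (s y : Fin n → Bool) (j : Fin n) :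
    (-1:ℝ) ^ dot s (Function.update y j (!y j))
      = (if s j then (-1:ℝ) else 1) * (-1:ℝ) ^ dot s y := by
  rw [chi_eq, chi_eq, ← Finset.mul_prod_erase _ _ (mem_univ j),
    ← Finset.mul_prod_erase univ (fun k => if s k && y k then (-1:ℝ) else 1) (mem_univ j)]
  rw [Function.update_self]
  have h2 : ∀ k ∈ univ.erase j,
      (if s k && Function.update y j (!y j) k then (-1:ℝ) else 1)
        = (if s k && y k then (-1:ℝ) else 1) := by
    intro k hk
    rw [Function.update_of_ne (Finset.mem_erase.1 hk).1]
  rw [Finset.prod_congr rfl h2]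
  cases hs : s j <;> cases hy : y j <;> simp

lemma flip_sum {n : ℕ} (f : (Fin n → Bool) → ℝ) (s : Fin n → Bool) (j : Fin n) :
    ∑ x : Fin n → Bool, f (Function.update x j (!x j)) * (-1:ℝ) ^ dot s x
      = (if s j then (-1:ℝ) else 1) * ∑ x : Fin n → Bool, f x * (-1:ℝ) ^ dot s x := by
  rw [Finset.mul_sum]
  apply Fintype.sum_bijective _ ((flip_invol j).bijective)
  intro x
  show f (Function.update x j (!x j)) * (-1:ℝ) ^ dot s x
      = (if s j then (-1:ℝ) else 1) *
        (f (Function.update x j (!x j)) * (-1:ℝ) ^ dot s (Function.update x j (!x j)))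
  rw [chi_flip]
  cases s j <;> simp

lemma fhat_noiseT {n : ℕ} (j : Fin n) (d : ℝ) (f : (Fin n → Bool) → ℝ) (s : Fin n → Bool) :
    fhat (noiseT j d f) s = (if s j then 1 - d else 1) * fhat f s := by
  unfold fhat noiseT
  have h : ∀ x : Fin n → Bool,
      ((1 - d / 2) * f x + d / 2 * f (Function.update x j (!x j))) * (-1:ℝ) ^ dot s x
      = (1 - d / 2) * (f x * (-1:ℝ) ^ dot s x)
        + (d / 2) * (f (Function.update x j (!x j)) * (-1:ℝ) ^ dot s x) := by
    intro x; ring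
  rw [Finset.sum_congr rfl (fun x _ => h x), Finset.sum_add_distrib,
    ← Finset.mul_sum, ← Finset.mul_sum, flip_sum]
  cases s j <;> simp <;> ring

lemma orth {n : ℕ} (x y : Fin n → Bool) :
    ∑ s : Fin n → Bool, ((-1:ℝ) ^ dot s x) * ((-1:ℝ) ^ dot s y)
      = if x = y then (2:ℝ)^n else 0 := by
  have h1 : ∀ s : Fin n → Bool,
      ((-1:ℝ) ^ dot s x) * ((-1:ℝ) ^ dot s y)
      = ∏ j, ((if s j && x j then (-1:ℝ) else 1) * (if s j && y j then (-1:ℝ) else 1)) := by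
    intro s; rw [chi_eq, chi_eq, ← Finset.prod_mul_distrib]
  rw [Finset.sum_congr rfl (fun s _ => h1 s)]
  have h2 : ∑ s : Fin n → Bool,
      ∏ j, ((if s j && x j then (-1:ℝ) else 1) * (if s j && y j then (-1:ℝ) else 1))
      = ∏ j, ∑ b : Bool, ((if b && x j then (-1:ℝ) else 1) * (if b && y j then (-1:ℝ) else 1)) := by
    rw [Finset.prod_univ_sum]
    rw [← Fintype.piFinset_univ]
  rw [h2]
  by_cases hxy : x = y
  · subst hxy
    simp only [if_pos rfl]
    have h3 : ∀ j : Fin n, ∑ b : Bool,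
        ((if b && x j then (-1:ℝ) else 1) * (if b && x j then (-1:ℝ) else 1)) = 2 := by
      intro j; cases h : x j <;> norm_num
    rw [Finset.prod_congr rfl (fun j _ => h3 j), Finset.prod_const]
    simp
  · rw [if_neg hxy]
    obtain ⟨j, hj⟩ : ∃ j, x j ≠ y j := by
      by_contra h
      push_neg at h
      exact hxy (funext h)
    apply Finset.prod_eq_zero (mem_univ j)
    cases hx : x j <;> cases hy : y j <;> simp [hx, hy] at hj ⊢

lemma parseval {n : ℕ} (f : (Fin n → Bool) → ℝ) :
    ∑ x, f x ^ 2 = 2^n * ∑ s, fhat f s ^ 2 := by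
  have h1 : ∀ s : Fin n → Bool, fhat f s ^ 2
      = (1/2^n : ℝ)^2 * ∑ x, ∑ y, f x * f y * (((-1:ℝ)^dot s x) * ((-1:ℝ)^dot s y)) := by
    intro s
    rw [fhat, mul_pow]
    rw [sq (∑ x, f x * (-1 : ℝ) ^ dot s x), Finset.sum_mul_sum]
    congr 1
    apply Finset.sum_congr rfl; intro x _
    apply Finset.sum_congr rfl; intro y _
    ring
  rw [Finset.sum_congr rfl (fun s _ => h1 s), ← Finset.mul_sum]
  rw [Finset.sum_comm]
  have h2 : ∀ x : Fin n → Bool,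
      ∑ s : Fin n → Bool, ∑ y, f x * f y * (((-1:ℝ)^dot s x) * ((-1:ℝ)^dot s y))
      = f x ^ 2 * 2^n := by
    intro x
    rw [Finset.sum_comm]
    have h3 : ∀ y : Fin n → Bool,
        ∑ s : Fin n → Bool, f x * f y * (((-1:ℝ)^dot s x) * ((-1:ℝ)^dot s y))
        = f x * f y * (if x = y then (2:ℝ)^n else 0) := by
      intro y; rw [← Finset.mul_sum, orth]
    rw [Finset.sum_congr rfl (fun y _ => h3 y)]
    simp [mul_ite, Finset.sum_ite_eq']
    ring
  rw [Finset.sum_congr rfl (fun x _ => h2 x), ← Finset.sum_mul]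
  have h2n : (2:ℝ)^n ≠ 0 := by positivity
  field_simp

lemma fhat_foldr {n : ℕ} (δ : Fin n → ℝ) (q : (Fin n → Bool) → ℝ) (s : Fin n → Bool)
    (l : List (Fin n)) :
    fhat (l.foldr (fun j g => noiseT j (δ j) g) q) s
      = (l.map (fun j => if s j then 1 - δ j else 1)).prod * fhat q s := by
  induction l with
  | nil => simp
  | cons j l ih => simp [fhat_noiseT, ih, mul_assoc]

lemma fhat_noiseComp {n : ℕ} (δ : Fin n → ℝ) (q : (Fin n → Bool) → ℝ) (s : Fin n → Bool) :
    fhat (noiseComp δ q) s = (∏ j, if s j then 1 - δ j else 1) * fhat q s := by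
  rw [noiseComp, fhat_foldr, Fin.prod_univ_def]

lemma fhat_sub {n : ℕ} (f g : (Fin n → Bool) → ℝ) (s : Fin n → Bool) :
    fhat (fun x => f x - g x) s = fhat f s - fhat g s := by
  unfold fhat
  rw [← mul_sub, ← Finset.sum_sub_distrib]
  congr 1
  apply Finset.sum_congr rfl
  intro x _
  ring

lemma prod_diff_le {α : Type*} [DecidableEq α] (A : Finset α) (a b : α → ℝ)
    (ha : ∀ i ∈ A, a i ∈ Set.Icc (0:ℝ) 1) (hb : ∀ i ∈ A, b i ∈ Set.Icc (0:ℝ) 1) :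
    |∏ i ∈ A, a i - ∏ i ∈ A, b i| ≤ ∑ i ∈ A, |a i - b i| := by
  induction A using Finset.induction with
  | empty => simp
  | @insert i A hi ih =>
    rw [Finset.prod_insert hi, Finset.prod_insert hi, Finset.sum_insert hi]
    have haA : ∀ k ∈ A, a k ∈ Set.Icc (0:ℝ) 1 := fun k hk => ha k (Finset.mem_insert_of_mem hk)
    have hbA : ∀ k ∈ A, b k ∈ Set.Icc (0:ℝ) 1 := fun k hk => hb k (Finset.mem_insert_of_mem hk)
    have hpa : ∏ k ∈ A, a k ∈ Set.Icc (0:ℝ) 1 := by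
      constructor
      · exact Finset.prod_nonneg fun k hk => (haA k hk).1
      · exact Finset.prod_le_one (fun k hk => (haA k hk).1) (fun k hk => (haA k hk).2)
    have hbi := hb i (Finset.mem_insert_self i A)
    calc |a i * ∏ k ∈ A, a k - b i * ∏ k ∈ A, b k|
        = |(a i - b i) * ∏ k ∈ A, a k + b i * (∏ k ∈ A, a k - ∏ k ∈ A, b k)| := by ring_nf
      _ ≤ |(a i - b i) * ∏ k ∈ A, a k| + |b i * (∏ k ∈ A, a k - ∏ k ∈ A, b k)| := abs_add_le _ _
      _ = |a i - b i| * |∏ k ∈ A, a k| + |b i| * |∏ k ∈ A, a k - ∏ k ∈ A, b k| := by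
          rw [abs_mul, abs_mul]
      _ ≤ |a i - b i| * 1 + 1 * |∏ k ∈ A, a k - ∏ k ∈ A, b k| := by
          apply add_le_add
          · exact mul_le_mul_of_nonneg_left
              (by rw [abs_of_nonneg hpa.1]; exact hpa.2) (abs_nonneg _)
          · exact mul_le_mul_of_nonneg_right
              (by rw [abs_of_nonneg hbi.1]; exact hbi.2) (abs_nonneg _)
      _ ≤ |a i - b i| + ∑ k ∈ A, |a k - b k| := by
          rw [mul_one, one_mul]
          exact add_le_add (le_refl _) (ih haA hbA)

theorem stmt11 {n : ℕ} (c : ℕ) (hc : 1 ≤ c) (q : (Fin n → Bool) → ℝ)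
    (hq : ∀ s, c < wt s → fhat q s = 0)
    (β : ℝ) (hβ : 0 ≤ β) (δ δ' : Fin n → ℝ)
    (hδ : ∀ j, δ j ∈ Set.Icc (0 : ℝ) 1) (hδ' : ∀ j, δ' j ∈ Set.Icc (0 : ℝ) 1)
    (hclose : ∀ j, |δ j - δ' j| ≤ β) :
    l1 (fun x => noiseComp δ q x - noiseComp δ' q x)
      ≤ c * β * 2 ^ n *
        Real.sqrt (∑ s ∈ Finset.univ.filter (fun s : Fin n → Bool => wt s ≤ c),
          fhat q s ^ 2) := by
  set g : (Fin n → Bool) → ℝ := fun x => noiseComp δ q x - noiseComp δ' q x with hgdef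
  set S : ℝ := ∑ s ∈ Finset.univ.filter (fun s : Fin n → Bool => wt s ≤ c),
      fhat q s ^ 2 with hSdef
  have hS0 : 0 ≤ S := Finset.sum_nonneg fun s _ => sq_nonneg _
  -- Fourier coefficient of g
  have hg : ∀ s, fhat g s =
      ((∏ j, if s j then 1 - δ j else 1) - (∏ j, if s j then 1 - δ' j else 1)) * fhat q s := by
    intro s
    rw [hgdef, fhat_sub, fhat_noiseComp, fhat_noiseComp, sub_mul]
  -- bound on |fhat g s|
  have hbound : ∀ s, |fhat g s| ≤ (c : ℝ) * β * |fhat q s| := by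
    intro s
    by_cases hws : wt s ≤ c
    · rw [hg, abs_mul]
      apply mul_le_mul_of_nonneg_right _ (abs_nonneg _)
      calc |(∏ j, if s j then 1 - δ j else 1) - (∏ j, if s j then 1 - δ' j else 1)|
          ≤ ∑ j, |(if s j then 1 - δ j else 1) - (if s j then 1 - δ' j else 1)| := by
            apply prod_diff_le
            · intro j _
              cases h : s j
              · simp
              · obtain ⟨h1, h2⟩ := hδ j
                constructor <;> simp <;> linarith
            · intro j _
              cases h : s j
              · simp
              · obtain ⟨h1, h2⟩ := hδ' j
                constructor <;> simp <;> linarith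
        _ ≤ ∑ j, (if s j then β else 0) := by
            apply Finset.sum_le_sum
            intro j _
            cases h : s j
            · simp
            · have := hclose j
              rw [abs_sub_comm] at this
              simpa using this
        _ = (wt s : ℝ) * β := by
            rw [← Finset.sum_filter, Finset.sum_const, wt, nsmul_eq_mul]
        _ ≤ (c : ℝ) * β := by
            apply mul_le_mul_of_nonneg_right _ hβ
            exact_mod_cast hws
    · rw [hg, hq s (lt_of_not_ge hws)]
      simp [hβ]
  -- coefficients vanish above level c
  have hvan : ∀ s, ¬ wt s ≤ c → fhat g s = 0 := by
    intro s hws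
    rw [hg, hq s (lt_of_not_ge hws), mul_zero]
  -- sum of squares bound
  have hsumsq : ∑ s, fhat g s ^ 2 ≤ ((c : ℝ) * β) ^ 2 * S := by
    rw [← Finset.sum_filter_add_sum_filter_not univ (fun s : Fin n → Bool => wt s ≤ c)]
    have hz : ∑ s ∈ univ.filter (fun s : Fin n → Bool => ¬ wt s ≤ c), fhat g s ^ 2 = 0 := by
      apply Finset.sum_eq_zero
      intro s hs
      rw [hvan s (Finset.mem_filter.1 hs).2]
      exact zero_pow two_ne_zero
    rw [hz, add_zero, hSdef, Finset.mul_sum]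
    apply Finset.sum_le_sum
    intro s _
    calc fhat g s ^ 2 = |fhat g s| ^ 2 := (sq_abs _).symm
      _ ≤ ((c : ℝ) * β * |fhat q s|) ^ 2 := by
          apply pow_le_pow_left₀ (abs_nonneg _) (hbound s)
      _ = ((c : ℝ) * β) ^ 2 * fhat q s ^ 2 := by
          rw [mul_pow, sq_abs]
  -- Cauchy–Schwarz : (l1 g)^2 ≤ 2^n * Σ g^2
  have hcard : ((univ : Finset (Fin n → Bool)).card : ℝ) = 2 ^ n := by
    simp [Finset.card_univ]
  have hcs : (l1 g) ^ 2 ≤ (2:ℝ)^n * ∑ x, g x ^ 2 := by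
    have h := Finset.sum_mul_sq_le_sq_mul_sq univ (fun _ : Fin n → Bool => (1:ℝ))
      (fun x => |g x|)
    simp only [one_mul, one_pow, sq_abs] at h
    rw [Finset.sum_const, nsmul_eq_mul, mul_one, hcard] at h
    exact h
  have hl1 : (l1 g) ^ 2 ≤ ((c : ℝ) * β * 2 ^ n) ^ 2 * S := by
    calc (l1 g) ^ 2 ≤ (2:ℝ)^n * ∑ x, g x ^ 2 := hcs
      _ = (2:ℝ)^n * ((2:ℝ)^n * ∑ s, fhat g s ^ 2) := by rw [parseval]
      _ ≤ (2:ℝ)^n * ((2:ℝ)^n * (((c : ℝ) * β) ^ 2 * S)) := by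
          apply mul_le_mul_of_nonneg_left _ (by positivity)
          exact mul_le_mul_of_nonneg_left hsumsq (by positivity)
      _ = ((c : ℝ) * β * 2 ^ n) ^ 2 * S := by ring
  have hl1nonneg : 0 ≤ l1 g := Finset.sum_nonneg fun x _ => abs_nonneg _
  have hcb : (0:ℝ) ≤ (c : ℝ) * β * 2 ^ n := by positivity
  calc l1 g = Real.sqrt ((l1 g) ^ 2) := (Real.sqrt_sq hl1nonneg).symm
    _ ≤ Real.sqrt (((c : ℝ) * β * 2 ^ n) ^ 2 * S) := Real.sqrt_le_sqrt hl1
    _ = (c : ℝ) * β * 2 ^ n * Real.sqrt S := by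
        rw [Real.sqrt_mul (sq_nonneg _), Real.sqrt_sq hcb]
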